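/- Let g ≥ 1 and let x_1 < x_2 < … < x_n be real numbers (n > 0). A sequence s = (s_1,…,s_n) with each s_i ∈ {−1,0,1} is the sequence of signs of some non-zero real solution h = (h_1,…,h_n) of the dual Vandermonde system ∑_{i=1}^n x_i^k h_i = 0 (k = 0,…,g−1) (i.e. sign(h_i) = s_i for all i) if and only if ch(s) ≥ g. -/

import Mathlib

open Finset
open scoped Classical

variable {n : ℕ} (s : Fin n → ℝ)

noncomputable def NS (i : Fin n) : Finset (Fin n) :=
  univ.filter (fun j => i < j ∧ s j ≠ 0)

noncomputable def nxt (i : Fin n) : Fin n :=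
  if h : (NS s i).Nonempty then (NS s i).min' h else i

noncomputable def FF : Finset (Fin n) :=
  univ.filter (fun i => ∃ j, i < j ∧ s i * s j < 0 ∧ ∀ k, i < k → k < j → s k = 0)

noncomputable def signChanges {n : ℕ} (h : Fin n → ℝ) : ℕ :=
  Set.ncard {p : Fin n × Fin n | p.1 < p.2 ∧ h p.1 * h p.2 < 0 ∧
    ∀ k : Fin n, p.1 < k → k < p.2 → h k = 0}

lemma signChanges_eq_card_FF : signChanges s = (FF s).card := by
  have hinj : Set.InjOn Prod.fst {p : Fin n × Fin n | p.1 < p.2 ∧ s p.1 * s p.2 < 0 ∧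
      ∀ k : Fin n, p.1 < k → k < p.2 → s k = 0} := by
    rintro ⟨i, j⟩ ⟨hij, hprod, hzero⟩ ⟨i', j'⟩ ⟨hij', hprod', hzero'⟩ (h : i = i')
    subst h
    simp only [Prod.mk.injEq, true_and]
    rcases lt_trichotomy j j' with h | h | h
    · exact absurd (hzero' j hij h) (fun hz => by simp [hz] at hprod)
    · exact h
    · exact absurd (hzero j' hij' h) (fun hz => by simp [hz] at hprod')
  have himg : Prod.fst '' {p : Fin n × Fin n | p.1 < p.2 ∧ s p.1 * s p.2 < 0 ∧
      ∀ k : Fin n, p.1 < k → k < p.2 → s k = 0} = ↑(FF s) := by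
    ext i
    simp only [Set.mem_image, Set.mem_setOf_eq, Finset.coe_filter, FF, mem_univ, true_and,
      Set.mem_setOf_eq]
    constructor
    · rintro ⟨⟨a, b⟩, ⟨h1, h2, h3⟩, rfl⟩; exact ⟨b, h1, h2, h3⟩
    · rintro ⟨j, h1, h2, h3⟩; exact ⟨(i, j), ⟨h1, h2, h3⟩, rfl⟩
  rw [signChanges, ← Set.ncard_image_of_injOn hinj, himg, Set.ncard_coe_finset]

lemma NS_nonempty {i j : Fin n} (hij : i < j) (hj : s j ≠ 0) : (NS s i).Nonempty :=
  ⟨j, by simp [NS, hij, hj]⟩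

lemma nxt_lt {i j : Fin n} (hij : i < j) (hj : s j ≠ 0) : i < nxt s i := by
  have h := NS_nonempty s hij hj
  rw [nxt, dif_pos h]
  have := (NS s i).min'_mem h
  simp only [NS, mem_filter] at this
  exact this.2.1

lemma nxt_ne {i j : Fin n} (hij : i < j) (hj : s j ≠ 0) : s (nxt s i) ≠ 0 := by
  have h := NS_nonempty s hij hj
  rw [nxt, dif_pos h]
  have := (NS s i).min'_mem h
  simp only [NS, mem_filter] at this
  exact this.2.2

lemma nxt_le {i j : Fin n} (hij : i < j) (hj : s j ≠ 0) : nxt s i ≤ j := by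
  have h := NS_nonempty s hij hj
  rw [nxt, dif_pos h]
  exact (NS s i).min'_le j (by simp [NS, hij, hj])

lemma nxt_zero {i : Fin n} {k : Fin n}
    (h1 : i < k) (h2 : k < nxt s i) : s k = 0 := by
  by_contra hk
  exact absurd (nxt_le s h1 hk) (not_le.mpr h2)

lemma mem_FF_elim {i : Fin n} (hi : i ∈ FF s) :
    s i ≠ 0 ∧ i < nxt s i ∧ s i * s (nxt s i) < 0 := by
  simp only [FF, mem_filter, mem_univ, true_and] at hi
  obtain ⟨j, hij, hprod, hzero⟩ := hi
  have hsi : s i ≠ 0 := fun h => by simp [h] at hprod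
  have hsj : s j ≠ 0 := fun h => by simp [h] at hprod
  have hnj : nxt s i = j := by
    rcases lt_trichotomy (nxt s i) j with h | h | h
    · exact absurd (hzero _ (nxt_lt s hij hsj) h) (nxt_ne s hij hsj)
    · exact h
    · exact absurd (nxt_le s hij hsj) (not_le.mpr h)
  rw [hnj]
  exact ⟨hsi, hnj ▸ nxt_lt s hij hsj, hprod⟩

lemma mem_FF_intro {i j : Fin n} (hij : i < j) (hj : s j ≠ 0)
    (hprod : s i * s (nxt s i) < 0) : i ∈ FF s := by
  simp only [FF, mem_filter, mem_univ, true_and]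
  exact ⟨nxt s i, nxt_lt s hij hj, hprod, fun k h1 h2 => nxt_zero s h1 h2⟩

/-- Values in {-1,0,1}: product < 0 means one is 1 and other is -1. -/
lemma neg_of_prod (hs : ∀ i, s i = -1 ∨ s i = 0 ∨ s i = 1) {i j : Fin n}
    (h : s i * s j < 0) : s j = -s i := by
  rcases hs i with h1 | h1 | h1 <;> rcases hs j with h2 | h2 | h2 <;>
    rw [h1, h2] at h ⊢ <;> norm_num at h <;> norm_num

/-- Both nonzero and not opposite: equal (values in {-1,0,1}). -/
lemma eq_of_not_neg (hs : ∀ i, s i = -1 ∨ s i = 0 ∨ s i = 1) {i j : Fin n}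
    (hi : s i ≠ 0) (hj : s j ≠ 0) (h : ¬ (s i * s j < 0)) : s j = s i := by
  rcases hs i with h1 | h1 | h1 <;> rcases hs j with h2 | h2 | h2 <;>
    rw [h1, h2] at h ⊢ <;> simp [h1,h2] at h hi hj ⊢

/-- Sign constancy along the support between consecutive FF elements. -/
lemma sign_const (hs : ∀ i, s i = -1 ∨ s i = 0 ∨ s i = 1) :
    ∀ d : ℕ, ∀ a b : Fin n, b.val - a.val ≤ d → a ≤ b → s a ≠ 0 → s b ≠ 0 →
    (∀ f ∈ FF s, ¬(a ≤ f ∧ f < b)) → s b = s a := by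
  intro d
  induction d with
  | zero =>
    intro a b hd hab ha hb hF
    have : a = b := le_antisymm hab (by omega)
    rw [← this]
  | succ d ih =>
    intro a b hd hab ha hb hF
    rcases eq_or_lt_of_le hab with h | h
    · rw [← h]
    · -- a < b, consider j := nxt s a
      have hj1 : a < nxt s a := nxt_lt s h hb
      have hj2 : s (nxt s a) ≠ 0 := nxt_ne s h hb
      have hj3 : nxt s a ≤ b := nxt_le s h hb
      have hnotF : a ∉ FF s := fun hmem => hF a hmem ⟨le_refl a, h⟩
      have heq : s (nxt s a) = s a := by
        apply eq_of_not_neg s hs ha hj2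
        intro hprod
        exact hnotF (mem_FF_intro s h hb hprod)
      rcases eq_or_lt_of_le hj3 with h2 | h2
      · rw [← h2, heq]
      · rw [← heq]
        apply ih (nxt s a) b (by omega) (le_of_lt h2) hj2 hb
        intro f hf ⟨hf1, hf2⟩
        exact hF f hf ⟨le_trans (le_of_lt hj1) hf1, hf2⟩

lemma card_filter_lt_fin (c : ℕ) (i : Fin c) : (univ.filter fun j => j < i).card = i.val := by
  have : (univ.filter fun j => j < i) = Iio i := by ext j; simp
  rw [this, Fin.card_Iio]

lemma card_filter_le_fin (c : ℕ) (i : Fin c) : (univ.filter fun j => j ≤ i).card = i.val + 1 := by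
  have : (univ.filter fun j => j ≤ i) = Iic i := by ext j; simp
  rw [this, Fin.card_Iic]

/-- A down-closed predicate on `Fin c` is an initial segment. -/
lemma downclosed_iff {c : ℕ} (P : Fin c → Prop) [DecidablePred P]
    (hP : ∀ r r' : Fin c, r' ≤ r → P r → P r') (r : Fin c) :
    P r ↔ r.val < (univ.filter P).card := by
  constructor
  · intro hr
    have hsub : (univ.filter fun j => j ≤ r) ⊆ univ.filter P := by
      intro j hj
      simp only [mem_filter, mem_univ, true_and] at hj ⊢
      exact hP r j hj hr
    have := Finset.card_le_card hsub
    rw [card_filter_le_fin] at this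
    omega
  · intro hr
    by_contra hPr
    have hsub : univ.filter P ⊆ univ.filter fun j => j < r := by
      intro j hj
      simp only [mem_filter, mem_univ, true_and] at hj ⊢
      rcases lt_or_ge j r with h | h
      · exact h
      · exact absurd (hP j r h hj) hPr
    have := Finset.card_le_card hsub
    rw [card_filter_lt_fin] at this
    omega

noncomputable def EE : Fin (FF s).card → Fin n :=
  fun t => ((FF s).orderIsoOfFin rfl t : Fin n)

lemma EE_strictMono : StrictMono (EE s) := by
  intro a b hab
  have := ((FF s).orderIsoOfFin rfl).lt_iff_lt.mpr hab
  exact this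

lemma EE_mem (t : Fin (FF s).card) : EE s t ∈ FF s := ((FF s).orderIsoOfFin rfl t).2

lemma EE_surj {f : Fin n} (hf : f ∈ FF s) : ∃ t, EE s t = f :=
  ⟨((FF s).orderIsoOfFin rfl).symm ⟨f, hf⟩, by
    simp [EE]⟩

noncomputable def pcount (i : Fin n) : ℕ :=
  (univ.filter fun r : Fin (FF s).card => EE s r < i).card

lemma pcount_le (i : Fin n) : pcount s i ≤ (FF s).card := by
  classical
  calc pcount s i ≤ (univ : Finset (Fin (FF s).card)).card := Finset.card_filter_le _ _
  _ = (FF s).card := by simp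

lemma FSEG (i : Fin n) (r : Fin (FF s).card) : EE s r < i ↔ r.val < pcount s i := by
  unfold pcount
  rw [Finset.filter_congr_decidable]
  exact downclosed_iff _ (fun a b hba ha => lt_of_le_of_lt ((EE_strictMono s).monotone hba) ha) r

lemma pcount_EE (r : Fin (FF s).card) : pcount s (EE s r) = r.val := by
  have : (univ.filter fun r' : Fin (FF s).card => EE s r' < EE s r)
      = univ.filter fun r' => r' < r := by
    apply Finset.filter_congr
    intro r' _
    simp [(EE_strictMono s).lt_iff_lt]
  rw [pcount, this, card_filter_lt_fin]

/-- The main sign-position lemma: on the support, the sign is the sign of the first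
support element times `(-1)^(number of FF elements before)`. -/
lemma SGN (hs : ∀ i, s i = -1 ∨ s i = 0 ∨ s i = 1) (i₀ : Fin n) (h₀ : s i₀ ≠ 0)
    (hmin : ∀ i, s i ≠ 0 → i₀ ≤ i) :
    ∀ i, s i ≠ 0 → s i = s i₀ * (-1) ^ (pcount s i) := by
  have key : ∀ N : ℕ, ∀ i : Fin n, i.val < N → s i ≠ 0 → s i = s i₀ * (-1) ^ (pcount s i) := by
    intro N
    induction N with
    | zero => intro i hi; omega
    | succ d ih =>
      intro i hiN hi
      rcases Nat.eq_zero_or_pos (pcount s i) with hp | hp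
      · -- no FF element before i
        have : s i = s i₀ := by
          apply sign_const s hs (i.val - i₀.val) i₀ i le_rfl (hmin i hi) h₀ hi
          intro f hf ⟨hf1, hf2⟩
          obtain ⟨r, rfl⟩ := EE_surj s hf
          have := (FSEG s i r).mp hf2
          omega
        rw [this, hp, pow_zero, mul_one]
      · -- there is a last FF element f before i
        have hm : pcount s i ≤ (FF s).card := pcount_le s i
        set r₀ : Fin (FF s).card := ⟨pcount s i - 1, by omega⟩ with hr₀
        set f := EE s r₀ with hfdef
        have hfi : f < i := (FSEG s i r₀).mpr (by simp [hr₀]; omega)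
        obtain ⟨hsf, hflt, hfprod⟩ := mem_FF_elim s (EE_mem s r₀)
        have hspf : s (nxt s f) ≠ 0 := fun h => by
          have h' : s f * s (nxt s f) < 0 := hfprod
          simp [h] at h'
        have hpf_le : nxt s f ≤ i := nxt_le s hfi hi
        have hIH : s f = s i₀ * (-1) ^ (pcount s f) := by
          apply ih f (by omega) hsf
        obtain ⟨q, hq⟩ : ∃ q, pcount s i = q + 1 := ⟨pcount s i - 1, by omega⟩
        have hpcf : pcount s f = q := by rw [hfdef, pcount_EE]; simp [hr₀, hq]
        have hconst : s i = s (nxt s f) := by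
          apply sign_const s hs (i.val - (nxt s f).val) (nxt s f) i le_rfl hpf_le hspf hi
          intro f' hf' ⟨hf1, hf2⟩
          obtain ⟨r, rfl⟩ := EE_surj s hf'
          have hrlt := (FSEG s i r).mp hf2
          have : EE s r ≤ f := by
            rw [hfdef]
            apply (EE_strictMono s).monotone
            show r.val ≤ r₀.val
            simp [hr₀]; omega
          exact absurd (le_trans hf1 this) (not_le.mpr hflt)
        have hneg : s (nxt s f) = - s f := neg_of_prod s hs hfprod
        rw [hconst, hneg, hIH, hpcf, hq, pow_succ]
        ring
  intro i hi
  exact key (i.val + 1) i (by omega) hi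

open Polynomial in
lemma forward_dir (g : ℕ) (x : Fin n → ℝ) (hx : StrictMono x)
    (hs : ∀ i, s i = -1 ∨ s i = 0 ∨ s i = 1)
    (h : Fin n → ℝ) (hne : h ≠ 0) (hmom : ∀ k, k < g → ∑ i, x i ^ k * h i = 0)
    (hsign : ∀ i, Real.sign (h i) = s i) : g ≤ (FF s).card := by
  by_contra hlt
  push_neg at hlt
  set c := (FF s).card with hc
  -- support is nonempty
  have hsupp_ne : (univ.filter fun i => s i ≠ 0).Nonempty := by
    obtain ⟨i, hi⟩ := Function.ne_iff.mp hne
    refine ⟨i, ?_⟩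
    simp only [mem_filter, mem_univ, true_and, ← hsign i]
    exact fun hz => hi (Real.sign_eq_zero_iff.mp hz)
  set i₀ := (univ.filter fun i => s i ≠ 0).min' hsupp_ne with hi₀
  have h₀ : s i₀ ≠ 0 := by
    have := (univ.filter fun i => s i ≠ 0).min'_mem hsupp_ne
    simpa using this
  have hmin : ∀ i, s i ≠ 0 → i₀ ≤ i := fun i hi =>
    Finset.min'_le _ i (by simpa using hi)
  -- separators
  set y : Fin c → ℝ := fun r => (x (EE s r) + x (nxt s (EE s r))) / 2 with hy
  have hy_gt : ∀ r : Fin c, x (EE s r) < y r := by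
    intro r
    obtain ⟨h1, h2, _⟩ := mem_FF_elim s (EE_mem s r)
    have := hx h2
    simp only [hy]; linarith
  have hy_lt : ∀ r : Fin c, y r < x (nxt s (EE s r)) := by
    intro r
    obtain ⟨h1, h2, _⟩ := mem_FF_elim s (EE_mem s r)
    have := hx h2
    simp only [hy]; linarith
  -- the polynomial
  set Q : Polynomial ℝ := ∏ r : Fin c, (X - C (y r)) with hQ
  have hQdeg : Q.natDegree = c := by
    rw [hQ, Polynomial.natDegree_prod _ _ (fun r _ => X_sub_C_ne_zero (y r))]
    simp
  have hQdeg' : Q.natDegree < g := by omega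
  -- the sum vanishes
  have hQsum : ∑ i, h i * Q.eval (x i) = 0 := by
    have heval : ∀ i, Q.eval (x i) = ∑ k ∈ range g, Q.coeff k * x i ^ k :=
      fun i => Polynomial.eval_eq_sum_range' hQdeg' (x i)
    calc ∑ i, h i * Q.eval (x i)
        = ∑ i, ∑ k ∈ range g, Q.coeff k * (x i ^ k * h i) := by
          refine Finset.sum_congr rfl fun i _ => ?_
          rw [heval i, Finset.mul_sum]
          refine Finset.sum_congr rfl fun k _ => by ring
      _ = ∑ k ∈ range g, Q.coeff k * ∑ i, x i ^ k * h i := by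
          rw [Finset.sum_comm]
          exact Finset.sum_congr rfl fun k _ => by rw [Finset.mul_sum]
      _ = 0 := by
          refine Finset.sum_eq_zero fun k hk => ?_
          rw [hmom k (mem_range.mp hk), mul_zero]
  -- positivity
  set ε : ℝ := s i₀ * (-1) ^ c with hε
  have hterm_pos : ∀ i, s i ≠ 0 → 0 < ε * (h i * Q.eval (x i)) := by
    intro i hzi
    · -- support point
      have hhi : h i ≠ 0 := fun hz => hzi (by rw [← hsign i, hz, Real.sign_zero])
      set p := pcount s i with hp
      have hple : p ≤ c := pcount_le s i
      set A : Finset (Fin c) := univ.filter fun r => EE s r < i with hA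
      set B : Finset (Fin c) := univ.filter fun r => ¬ EE s r < i with hB
      have hcardA : A.card = p := rfl
      have hcardB : B.card = c - p := by
        have := Finset.card_filter_add_card_filter_not
          (s := (univ : Finset (Fin c))) (fun r => EE s r < i)
        simp only [Finset.card_univ, Fintype.card_fin] at this
        rw [hB]; rw [hcardA] at *; omega
      have hQeval : Q.eval (x i) = (∏ r ∈ A, (x i - y r)) * ∏ r ∈ B, (x i - y r) := by
        rw [hQ, Polynomial.eval_prod]
        simp only [Polynomial.eval_sub, Polynomial.eval_X, Polynomial.eval_C]
        rw [← Finset.prod_union (Finset.disjoint_filter_filter_not univ univ _),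
          Finset.filter_union_filter_not_eq]
      have hApos : 0 < ∏ r ∈ A, (x i - y r) := by
        apply Finset.prod_pos
        intro r hr
        simp only [hA, mem_filter, mem_univ, true_and] at hr
        have h1 : nxt s (EE s r) ≤ i := nxt_le s hr hzi
        have h2 : y r < x (nxt s (EE s r)) := hy_lt r
        have h3 : x (nxt s (EE s r)) ≤ x i := hx.monotone h1
        linarith
      have hBneg : ∏ r ∈ B, (x i - y r) = (-1) ^ (c - p) * ∏ r ∈ B, (y r - x i) := by
        have : ∀ r ∈ B, (x i - y r) = (-1) * (y r - x i) := fun r _ => by ring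
        rw [Finset.prod_congr rfl this, Finset.prod_mul_distrib, Finset.prod_const, hcardB]
      have hBpos : 0 < ∏ r ∈ B, (y r - x i) := by
        apply Finset.prod_pos
        intro r hr
        simp only [hB, mem_filter, mem_univ, true_and, not_lt] at hr
        have h1 : x i ≤ x (EE s r) := hx.monotone hr
        have h2 : x (EE s r) < y r := hy_gt r
        linarith
      have hsi : s i = s i₀ * (-1) ^ p := SGN s hs i₀ h₀ hmin i hzi
      -- ε * (-1)^(c-p) = s i₀ * (-1)^p
      have hpow : ε * (-1 : ℝ) ^ (c - p) = s i₀ * (-1) ^ p := by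
        rw [hε]
        have e1 : ((-1 : ℝ)) ^ p * (-1) ^ (c - p) = (-1) ^ c := by
          rw [← pow_add]; congr 1; omega
        have e3 : ((-1 : ℝ)) ^ (c - p) * (-1) ^ (c - p) = 1 := by
          rw [← pow_add, ← two_mul, pow_mul]; norm_num
        calc s i₀ * (-1) ^ c * (-1 : ℝ) ^ (c - p)
            = s i₀ * ((-1) ^ p * ((-1 : ℝ) ^ (c - p) * (-1) ^ (c - p))) := by rw [← e1]; ring
          _ = s i₀ * (-1) ^ p := by rw [e3]; ring
      have key : ε * (h i * Q.eval (x i))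
          = (Real.sign (h i) * h i) * ((∏ r ∈ A, (x i - y r)) * ∏ r ∈ B, (y r - x i)) := by
        rw [hQeval, hBneg, hsign i, hsi]
        calc ε * (h i * ((∏ r ∈ A, (x i - y r)) * ((-1) ^ (c - p) * ∏ r ∈ B, (y r - x i))))
            = (ε * (-1 : ℝ) ^ (c - p)) * h i * ((∏ r ∈ A, (x i - y r)) * ∏ r ∈ B, (y r - x i)) := by
              ring
          _ = _ := by rw [hpow]
      rw [key]
      have := Real.sign_mul_pos_of_ne_zero (h i) hhi
      positivity
  have hterm : ∀ i, 0 ≤ ε * (h i * Q.eval (x i)) := by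
    intro i
    rcases eq_or_ne (s i) 0 with hzi | hzi
    · have : h i = 0 := Real.sign_eq_zero_iff.mp (by rw [hsign i, hzi])
      simp [this]
    · exact le_of_lt (hterm_pos i hzi)
  have hsum_pos : 0 < ∑ i, ε * (h i * Q.eval (x i)) :=
    Finset.sum_pos' (fun i _ => hterm i) ⟨i₀, mem_univ _, hterm_pos i₀ h₀⟩
  rw [← Finset.mul_sum, hQsum, mul_zero] at hsum_pos
  exact lt_irrefl _ hsum_pos

lemma EE_next_neg (hs : ∀ i, s i = -1 ∨ s i = 0 ∨ s i = 1) (r : Fin (FF s).card) :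
    s (nxt s (EE s r)) = - s (EE s r) := by
  obtain ⟨h1, h2, h3⟩ := mem_FF_elim s (EE_mem s r)
  exact neg_of_prod s hs h3

lemma EE_alt (hs : ∀ i, s i = -1 ∨ s i = 0 ∨ s i = 1) (r1 r2 : Fin (FF s).card)
    (hr : r1.val + 1 = r2.val) : s (EE s r2) = - s (EE s r1) := by
  obtain ⟨hs1, hlt1, hprod1⟩ := mem_FF_elim s (EE_mem s r1)
  obtain ⟨hs2, _, _⟩ := mem_FF_elim s (EE_mem s r2)
  have hr12 : EE s r1 < EE s r2 := EE_strictMono s (by omega : r1 < r2)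
  have hnle : nxt s (EE s r1) ≤ EE s r2 := nxt_le s hr12 hs2
  have hnne : s (nxt s (EE s r1)) ≠ 0 := fun h => by
    rw [h] at hprod1; simp at hprod1
  have hconst : s (EE s r2) = s (nxt s (EE s r1)) := by
    apply sign_const s hs ((EE s r2).val - (nxt s (EE s r1)).val) _ _ le_rfl hnle hnne hs2
    rintro f' hf' ⟨hf1, hf2⟩
    obtain ⟨r', rfl⟩ := EE_surj s hf'
    have h1 : EE s r1 < EE s r' := lt_of_lt_of_le hlt1 hf1
    have h2 : r1 < r' := (EE_strictMono s).lt_iff_lt.mp h1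
    have h3 : r2 ≤ r' := by omega
    exact absurd ((EE_strictMono s).monotone h3) (not_le.mpr hf2)
  rw [hconst, EE_next_neg s hs r1]

lemma splice_left (hs : ∀ i, s i = -1 ∨ s i = 0 ∨ s i = 1) {j : Fin n} (hj : s j ≠ 0)
    (r : Fin (FF s).card) (hr : r.val + 1 = pcount s j) : s j = - s (EE s r) := by
  obtain ⟨hs1, hlt1, hprod1⟩ := mem_FF_elim s (EE_mem s r)
  have hrj : EE s r < j := (FSEG s j r).mpr (by omega)
  have hnle : nxt s (EE s r) ≤ j := nxt_le s hrj hj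
  have hnne : s (nxt s (EE s r)) ≠ 0 := fun h => by
    rw [h] at hprod1; simp at hprod1
  have hconst : s j = s (nxt s (EE s r)) := by
    apply sign_const s hs (j.val - (nxt s (EE s r)).val) _ _ le_rfl hnle hnne hj
    rintro f' hf' ⟨hf1, hf2⟩
    obtain ⟨r', rfl⟩ := EE_surj s hf'
    have h1 : EE s r < EE s r' := lt_of_lt_of_le hlt1 hf1
    have h2 : r < r' := (EE_strictMono s).lt_iff_lt.mp h1
    have h3 : pcount s j ≤ r'.val := by omega
    exact absurd ((FSEG s j r').mp hf2) (by omega)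
  rw [hconst, EE_next_neg s hs r]

lemma splice_right (hs : ∀ i, s i = -1 ∨ s i = 0 ∨ s i = 1) {j : Fin n} (hj : s j ≠ 0)
    (r : Fin (FF s).card) (hr : r.val = pcount s j) :
    s (EE s r) = s j ∧ j ≤ EE s r := by
  obtain ⟨hs1, _, _⟩ := mem_FF_elim s (EE_mem s r)
  have hjr : j ≤ EE s r := by
    by_contra hcon
    push_neg at hcon
    exact absurd ((FSEG s j r).mp hcon) (by omega)
  refine ⟨?_, hjr⟩
  apply sign_const s hs ((EE s r).val - j.val) _ _ le_rfl hjr hj hs1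
  rintro f' hf' ⟨hf1, hf2⟩
  obtain ⟨r', rfl⟩ := EE_surj s hf'
  have h2 : r' < r := (EE_strictMono s).lt_iff_lt.mp hf2
  have h3 : EE s r' < j := (FSEG s j r').mpr (by omega)
  exact absurd hf1 (not_le.mpr h3)

noncomputable def CH (j : Fin n) : ℕ → Fin n := fun t =>
  if ht : t < pcount s j then EE s ⟨t, lt_of_lt_of_le ht (pcount_le s j)⟩
  else if t = pcount s j then j
  else if ht2 : t < (FF s).card then EE s ⟨t, ht2⟩
  else if h3 : 0 < (FF s).card then nxt s (EE s ⟨(FF s).card - 1, by omega⟩)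
  else j

lemma CH_eq_lt {j : Fin n} {t : ℕ} (ht : t < pcount s j) :
    CH s j t = EE s ⟨t, lt_of_lt_of_le ht (pcount_le s j)⟩ := by
  simp [CH, ht]

lemma CH_eq_p {j : Fin n} : CH s j (pcount s j) = j := by
  simp [CH]

lemma CH_eq_mid {j : Fin n} {t : ℕ} (ht : pcount s j < t) (ht2 : t < (FF s).card) :
    CH s j t = EE s ⟨t, ht2⟩ := by
  rw [CH]
  rw [dif_neg (by omega), if_neg (by omega), dif_pos ht2]

lemma CH_eq_last {j : Fin n} {t : ℕ} (hm : 0 < (FF s).card)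
    (ht : pcount s j < t) (ht2 : (FF s).card ≤ t) :
    CH s j t = nxt s (EE s ⟨(FF s).card - 1, by omega⟩) := by
  rw [CH]
  rw [dif_neg (by omega), if_neg (by omega), dif_neg (by omega), dif_pos hm]

lemma CH_supp (hs : ∀ i, s i = -1 ∨ s i = 0 ∨ s i = 1) {j : Fin n} (hj : s j ≠ 0)
    (hm : 0 < (FF s).card) : ∀ t ≤ (FF s).card, s (CH s j t) ≠ 0 := by
  intro t ht
  rcases lt_trichotomy t (pcount s j) with h | h | h
  · rw [CH_eq_lt s h]
    exact (mem_FF_elim s (EE_mem s _)).1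
  · rw [h, CH_eq_p]; exact hj
  · rcases lt_or_ge t (FF s).card with h2 | h2
    · rw [CH_eq_mid s h h2]
      exact (mem_FF_elim s (EE_mem s _)).1
    · rw [CH_eq_last s hm h h2]
      rw [EE_next_neg s hs ⟨(FF s).card - 1, by omega⟩]
      have := (mem_FF_elim s (EE_mem s ⟨(FF s).card - 1, by omega⟩)).1
      simpa using this

lemma CH_mono_succ (hs : ∀ i, s i = -1 ∨ s i = 0 ∨ s i = 1) {j : Fin n} (hj : s j ≠ 0)
    (hm : 0 < (FF s).card) :
    ∀ t, t + 1 ≤ (FF s).card → CH s j t < CH s j (t + 1) := by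
  intro t ht
  rcases lt_trichotomy (t+1) (pcount s j) with h | h | h
  · rw [CH_eq_lt s (by omega), CH_eq_lt s h]
    exact EE_strictMono s (by simp)
  · rw [CH_eq_lt s (by omega), show CH s j (t+1) = j from by rw [h, CH_eq_p]]
    exact (FSEG s j _).mpr (by simp; omega)
  · have htp : pcount s j ≤ t := by omega
    rcases eq_or_lt_of_le htp with h1 | h1
    · -- t = p
      have hpm : pcount s j < (FF s).card := by omega
      rw [show CH s j t = j from by rw [← h1, CH_eq_p]]
      obtain ⟨hsE, hjE⟩ := splice_right s hs hj ⟨pcount s j, hpm⟩ rfl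
      rcases lt_or_ge (t+1) (FF s).card with h2 | h2
      · rw [CH_eq_mid s h h2]
        calc j ≤ EE s ⟨pcount s j, hpm⟩ := hjE
          _ < EE s ⟨t+1, h2⟩ := EE_strictMono s (by simp [Fin.lt_def]; omega)
      · rw [CH_eq_last s hm h h2]
        have h4 : (FF s).card - 1 = pcount s j := by omega
        simp only [h4]
        obtain ⟨_, hlt, _⟩ := mem_FF_elim s (EE_mem s ⟨pcount s j, hpm⟩)
        exact lt_of_le_of_lt hjE hlt
    · -- t > p
      have htm : t < (FF s).card := by omega
      rw [CH_eq_mid s h1 htm]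
      rcases lt_or_ge (t+1) (FF s).card with h2 | h2
      · rw [CH_eq_mid s (by omega) h2]
        exact EE_strictMono s (by simp [Fin.lt_def])
      · rw [CH_eq_last s hm (by omega) h2]
        have h4 : (FF s).card - 1 = t := by omega
        simp only [h4]
        exact (mem_FF_elim s (EE_mem s ⟨t, htm⟩)).2.1

lemma CH_alt (hs : ∀ i, s i = -1 ∨ s i = 0 ∨ s i = 1) {j : Fin n} (hj : s j ≠ 0)
    (hm : 0 < (FF s).card) :
    ∀ t, t + 1 ≤ (FF s).card → s (CH s j (t + 1)) = - s (CH s j t) := by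
  intro t ht
  rcases lt_trichotomy (t+1) (pcount s j) with h | h | h
  · rw [CH_eq_lt s h, CH_eq_lt s (show t < pcount s j by omega)]
    exact EE_alt s hs _ _ (by simp)
  · rw [show CH s j (t+1) = j from by rw [h, CH_eq_p],
      CH_eq_lt s (show t < pcount s j by omega)]
    exact splice_left s hs hj _ (by simp; omega)
  · have htp : pcount s j ≤ t := by omega
    rcases eq_or_lt_of_le htp with h1 | h1
    · -- t = p
      have hpm : pcount s j < (FF s).card := by omega
      rw [show CH s j t = j from by rw [← h1, CH_eq_p]]
      obtain ⟨hsE, hjE⟩ := splice_right s hs hj ⟨pcount s j, hpm⟩ rfl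
      rcases lt_or_ge (t+1) (FF s).card with h2 | h2
      · rw [CH_eq_mid s h h2]
        rw [EE_alt s hs ⟨pcount s j, hpm⟩ ⟨t+1, h2⟩ (by simp; omega), hsE]
      · rw [CH_eq_last s hm h h2]
        have h4 : (FF s).card - 1 = pcount s j := by omega
        simp only [h4]
        rw [EE_next_neg s hs, hsE]
    · -- t > p
      have htm : t < (FF s).card := by omega
      rw [CH_eq_mid s h1 htm]
      rcases lt_or_ge (t+1) (FF s).card with h2 | h2
      · rw [CH_eq_mid s (by omega) h2]
        exact EE_alt s hs _ _ (by simp)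
      · rw [CH_eq_last s hm (by omega) h2]
        have h4 : (FF s).card - 1 = t := by omega
        simp only [h4]
        rw [EE_next_neg s hs]

lemma CH_mono (hs : ∀ i, s i = -1 ∨ s i = 0 ∨ s i = 1) {j : Fin n} (hj : s j ≠ 0)
    (hm : 0 < (FF s).card) :
    ∀ u v, u < v → v ≤ (FF s).card → CH s j u < CH s j v := by
  intro u v
  induction v with
  | zero => omega
  | succ d ih =>
    intro huv hv
    rcases eq_or_lt_of_le (Nat.lt_succ_iff.mp huv) with h | h
    · rw [h]; exact CH_mono_succ s hs hj hm d hv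
    · exact lt_trans (ih h (by omega)) (CH_mono_succ s hs hj hm d hv)

lemma chain_exists (hs : ∀ i, s i = -1 ∨ s i = 0 ∨ s i = 1) {j : Fin n} (hj : s j ≠ 0)
    (g : ℕ) (hg : 1 ≤ g) (hcard : g ≤ (FF s).card) :
    ∃ z : Fin (g+1) → Fin n, StrictMono z ∧ (∀ t, s (z t) ≠ 0) ∧
      (∀ t : Fin g, s (z t.succ) = - s (z t.castSucc)) ∧ ∃ t, z t = j := by
  have hm : 0 < (FF s).card := by omega
  have hpm : pcount s j ≤ (FF s).card := pcount_le s j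
  set a := min (pcount s j) ((FF s).card - g) with ha
  have hag : a + g ≤ (FF s).card := by omega
  have hap : a ≤ pcount s j ∧ pcount s j ≤ a + g := by omega
  refine ⟨fun t => CH s j (a + t.val), ?_, ?_, ?_, ?_⟩
  · intro t1 t2 h12
    exact CH_mono s hs hj hm _ _ (by omega) (by omega)
  · intro t
    exact CH_supp s hs hj hm _ (by omega)
  · intro t
    have halt := CH_alt s hs hj hm (a + t.val) (by have := t.isLt; omega)
    have e : a + (t.val + 1) = a + t.val + 1 := by omega
    simp only [Fin.val_succ, Fin.coe_castSucc, e]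
    exact halt
  · refine ⟨⟨pcount s j - a, by omega⟩, ?_⟩
    simp only
    rw [show a + (pcount s j - a) = pcount s j from by omega, CH_eq_p]

section DD
open Polynomial

lemma coeff_basis {g : ℕ} (ζ : Fin (g+1) → ℝ) (hζ : Function.Injective ζ) (t : Fin (g+1)) :
    (Lagrange.basis univ ζ t).coeff g = (∏ r ∈ univ.erase t, (ζ t - ζ r))⁻¹ := by
  have hdeg : (Lagrange.basis univ ζ t).natDegree = g := by
    rw [Lagrange.natDegree_basis (hζ.injOn) (mem_univ t)]
    simp
  have hlead : (Lagrange.basis univ ζ t).leadingCoeff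
      = ∏ r ∈ univ.erase t, (ζ t - ζ r)⁻¹ := by
    rw [Lagrange.basis, Polynomial.leadingCoeff_prod]
    refine Finset.prod_congr rfl fun r hr => ?_
    have hne : ζ t ≠ ζ r := fun h => (Finset.mem_erase.mp hr).1 (hζ h).symm
    rw [Lagrange.basisDivisor, Polynomial.leadingCoeff_mul, Polynomial.leadingCoeff_C,
      Polynomial.leadingCoeff_X_sub_C, mul_one]
  have h1 := Polynomial.coeff_natDegree (p := Lagrange.basis univ ζ t)
  rw [hdeg, hlead] at h1
  rw [h1, ← Finset.prod_inv_distrib]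

lemma divided_diff {g : ℕ} (ζ : Fin (g+1) → ℝ) (hζ : Function.Injective ζ)
    (k : ℕ) (hk : k < g) :
    ∑ t, ζ t ^ k * (∏ r ∈ univ.erase t, (ζ t - ζ r))⁻¹ = 0 := by
  have hcard : (#(univ : Finset (Fin (g+1))) : WithBot ℕ) = (g+1 : ℕ) := by simp
  have hdeg : ((X : ℝ[X]) ^ k).degree < #(univ : Finset (Fin (g+1))) := by
    rw [hcard, Polynomial.degree_X_pow]
    exact_mod_cast Nat.lt_succ_of_lt hk
  have heq := Lagrange.eq_interpolate (f := (X : ℝ[X])^k) (hζ.injOn) hdeg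
  have hcoeff := congrArg (fun p => Polynomial.coeff p g) heq
  simp only [Polynomial.coeff_X_pow, Lagrange.interpolate_apply,
    Polynomial.finset_sum_coeff, Polynomial.coeff_C_mul] at hcoeff
  rw [if_neg (by omega : ¬ g = k)] at hcoeff
  rw [show ∑ t, ζ t ^ k * (∏ r ∈ univ.erase t, (ζ t - ζ r))⁻¹
      = ∑ x, eval (ζ x) ((X:ℝ[X])^k) * (Lagrange.basis univ ζ x).coeff g from
    Finset.sum_congr rfl fun t _ => by rw [coeff_basis ζ hζ t, eval_pow, eval_X]]
  exact hcoeff.symm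

lemma prod_erase_ne_zero {g : ℕ} (ζ : Fin (g+1) → ℝ) (hζ : StrictMono ζ) (t : Fin (g+1)) :
    ∏ r ∈ univ.erase t, (ζ t - ζ r) ≠ 0 := by
  apply Finset.prod_ne_zero_iff.mpr
  intro r hr
  have : r ≠ t := (Finset.mem_erase.mp hr).1
  exact sub_ne_zero_of_ne (fun h => this (hζ.injective h.symm))

lemma wsign {g : ℕ} (ζ : Fin (g+1) → ℝ) (hζ : StrictMono ζ) (t : Fin g) :
    (∏ r ∈ univ.erase t.castSucc, (ζ t.castSucc - ζ r))
      * (∏ r ∈ univ.erase t.succ, (ζ t.succ - ζ r)) < 0 := by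
  set a := t.castSucc with hadef
  set b := t.succ with hbdef
  have hab : a < b := Fin.castSucc_lt_succ (i := t)
  have hbne : b ≠ a := ne_of_gt hab
  have hane : a ≠ b := ne_of_lt hab
  have hb_mem : b ∈ univ.erase a := Finset.mem_erase.mpr ⟨hbne, mem_univ b⟩
  have ha_mem : a ∈ univ.erase b := Finset.mem_erase.mpr ⟨hane, mem_univ a⟩
  have hA : ∏ r ∈ univ.erase a, (ζ a - ζ r)
      = (ζ a - ζ b) * ∏ r ∈ (univ.erase a).erase b, (ζ a - ζ r) :=
    (Finset.mul_prod_erase _ _ hb_mem).symm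
  have hB : ∏ r ∈ univ.erase b, (ζ b - ζ r)
      = (ζ b - ζ a) * ∏ r ∈ (univ.erase b).erase a, (ζ b - ζ r) :=
    (Finset.mul_prod_erase _ _ ha_mem).symm
  have hSS : (univ.erase b).erase a = (univ.erase a).erase b := Finset.erase_right_comm
  rw [hA, hB, hSS]
  have hP : 0 < ∏ r ∈ (univ.erase a).erase b, ((ζ a - ζ r) * (ζ b - ζ r)) := by
    apply Finset.prod_pos
    intro r hr
    have hrb : r ≠ b := (Finset.mem_erase.mp hr).1
    have hra : r ≠ a := (Finset.mem_erase.mp (Finset.mem_erase.mp hr).2).1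
    have : r < a ∨ b < r := by
      rcases lt_trichotomy r a with h | h | h
      · exact Or.inl h
      · exact absurd h hra
      · rcases lt_trichotomy r b with h2 | h2 | h2
        · exfalso
          rw [hadef] at h
          rw [hbdef] at h2
          have h3 := t.isLt
          simp [Fin.lt_def] at h h2
          omega
        · exact absurd h2 hrb
        · exact Or.inr h2
    rcases this with h | h
    · have h1 := hζ h
      have h2 := hζ (lt_trans h hab)
      exact mul_pos (by linarith) (by linarith)
    · have h1 := hζ h
      have h2 := hζ (lt_trans hab h)
      exact mul_pos_of_neg_of_neg (by linarith) (by linarith)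
  have hneg : (ζ a - ζ b) * (ζ b - ζ a) < 0 := by
    have := hζ hab
    nlinarith
  have hprod : ∏ r ∈ (univ.erase a).erase b, ((ζ a - ζ r) * (ζ b - ζ r))
      = (∏ r ∈ (univ.erase a).erase b, (ζ a - ζ r))
        * ∏ r ∈ (univ.erase a).erase b, (ζ b - ζ r) := Finset.prod_mul_distrib
  rw [hprod] at hP
  nlinarith [hP, hneg]
end DD

lemma backward_dir (g : ℕ) (hg : 1 ≤ g) (x : Fin n → ℝ) (hx : StrictMono x)
    (hs : ∀ i, s i = -1 ∨ s i = 0 ∨ s i = 1) (hcard : g ≤ (FF s).card) :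
    ∃ h : Fin n → ℝ, h ≠ 0 ∧ (∀ k, k < g → ∑ i, x i ^ k * h i = 0) ∧
      ∀ i, Real.sign (h i) = s i := by
  have hch : ∀ j : {j : Fin n // s j ≠ 0}, ∃ z : Fin (g+1) → Fin n, StrictMono z ∧
      (∀ t, s (z t) ≠ 0) ∧ (∀ t : Fin g, s (z t.succ) = - s (z t.castSucc)) ∧
      ∃ t, z t = j.1 :=
    fun j => chain_exists s hs j.2 g hg hcard
  choose z hzmono hzsupp hzalt hzt using hch
  have hζmono : ∀ j, StrictMono (fun t => x (z j t)) := fun j => hx.comp (hzmono j)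
  set w : {j : Fin n // s j ≠ 0} → Fin (g+1) → ℝ :=
    fun j t => (∏ r ∈ univ.erase t, (x (z j t) - x (z j r)))⁻¹ with hwdef
  set σ : {j : Fin n // s j ≠ 0} → ℝ :=
    fun j => s (z j 0) * Real.sign (w j 0) with hσdef
  have hwne : ∀ j t, w j t ≠ 0 := fun j t =>
    inv_ne_zero (prod_erase_ne_zero _ (hζmono j) t)
  have hσne : ∀ j, σ j ≠ 0 := fun j =>
    mul_ne_zero (hzsupp j 0) (fun hz => hwne j 0 (Real.sign_eq_zero_iff.mp hz))
  -- positivity of the terms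
  have hpos : ∀ j t, 0 < s (z j t) * (σ j * w j t) := by
    intro j t
    induction t using Fin.induction with
    | zero =>
      have h1 : 0 < Real.sign (w j 0) * w j 0 := Real.sign_mul_pos_of_ne_zero _ (hwne j 0)
      have h2 : 0 < s (z j 0) * s (z j 0) := mul_self_pos.mpr (hzsupp j 0)
      calc (0:ℝ) < (s (z j 0) * s (z j 0)) * (Real.sign (w j 0) * w j 0) := mul_pos h2 h1
        _ = s (z j 0) * (σ j * w j 0) := by rw [hσdef]; ring
    | succ t ih =>
      have hss : s (z j t.succ) = - s (z j t.castSucc) := hzalt j t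
      have hsc2 : 0 < s (z j t.castSucc) * s (z j t.castSucc) :=
        mul_self_pos.mpr (hzsupp j t.castSucc)
      have hσ2 : 0 < σ j * σ j := mul_self_pos.mpr (hσne j)
      have hw : w j t.castSucc * w j t.succ < 0 := by
        rw [hwdef]
        simp only
        rw [← mul_inv]
        exact inv_lt_zero.mpr (wsign _ (hζmono j) t)
      have hkey : (s (z j t.castSucc) * (σ j * w j t.castSucc))
          * (s (z j t.succ) * (σ j * w j t.succ))
          = -((s (z j t.castSucc) * s (z j t.castSucc)) * ((σ j * σ j)
            * (w j t.castSucc * w j t.succ))) := by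
        rw [hss]; ring
      have hprodpos : 0 < (s (z j t.castSucc) * (σ j * w j t.castSucc))
          * (s (z j t.succ) * (σ j * w j t.succ)) := by
        rw [hkey]
        have : (σ j * σ j) * (w j t.castSucc * w j t.succ) < 0 :=
          mul_neg_of_pos_of_neg hσ2 hw
        have := mul_neg_of_pos_of_neg hsc2 this
        linarith
      nlinarith [ih, hprodpos]
  -- the solution
  set v : {j : Fin n // s j ≠ 0} → Fin n → ℝ :=
    fun j i => ∑ t, if i = z j t then σ j * w j t else 0 with hvdef
  set hfun : Fin n → ℝ := fun i => ∑ j, v j i with hhdef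
  -- moment equations
  have hmom : ∀ k, k < g → ∑ i, x i ^ k * hfun i = 0 := by
    intro k hk
    have hswap : ∑ i, x i ^ k * hfun i = ∑ j, ∑ i, x i ^ k * v j i := by
      rw [Finset.sum_comm]
      refine Finset.sum_congr rfl fun i _ => ?_
      rw [hhdef]
      simp only
      rw [Finset.mul_sum]
    rw [hswap]
    refine Finset.sum_eq_zero fun j _ => ?_
    have hinner : ∑ i, x i ^ k * v j i = ∑ t, x (z j t) ^ k * (σ j * w j t) := by
      rw [hvdef]
      simp only
      have : ∀ i : Fin n, x i ^ k * (∑ t, if i = z j t then σ j * w j t else 0)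
          = ∑ t, if i = z j t then x (z j t) ^ k * (σ j * w j t) else 0 := by
        intro i
        rw [Finset.mul_sum]
        refine Finset.sum_congr rfl fun t _ => ?_
        split
        · rename_i hit
          rw [hit]
        · simp
      rw [Finset.sum_congr rfl fun i _ => this i, Finset.sum_comm]
      refine Finset.sum_congr rfl fun t _ => ?_
      rw [Finset.sum_ite_eq' univ (z j t) (fun _ => x (z j t) ^ k * (σ j * w j t))]
      simp
    rw [hinner]
    have : ∑ t, x (z j t) ^ k * (σ j * w j t)
        = σ j * ∑ t, x (z j t) ^ k * w j t := by
      rw [Finset.mul_sum]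
      exact Finset.sum_congr rfl fun t _ => by ring
    rw [this, divided_diff (fun t => x (z j t)) (hζmono j).injective k hk, mul_zero]
  -- signs
  have hsgn : ∀ i, Real.sign (hfun i) = s i := by
    intro i
    rcases eq_or_ne (s i) 0 with hi | hi
    · have : hfun i = 0 := by
        rw [hhdef]
        simp only
        refine Finset.sum_eq_zero fun j _ => ?_
        rw [hvdef]
        simp only
        refine Finset.sum_eq_zero fun t _ => ?_
        rw [if_neg]
        intro hit
        exact hzsupp j t (by rw [← hit]; exact hi)
      rw [this, Real.sign_zero, hi]
    · have hterm : ∀ j, 0 ≤ s i * v j i := by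
        intro j
        rw [hvdef]
        simp only
        rw [Finset.mul_sum]
        refine Finset.sum_nonneg fun t _ => ?_
        split
        · rename_i hit
          rw [hit]
          exact le_of_lt (hpos j t)
        · simp
      have hself : 0 < s i * v ⟨i, hi⟩ i := by
        rw [hvdef]
        simp only
        rw [Finset.mul_sum]
        obtain ⟨t₀, ht₀⟩ := hzt ⟨i, hi⟩
        have ht₀' : z ⟨i, hi⟩ t₀ = i := ht₀
        refine Finset.sum_pos' (fun t _ => ?_) ⟨t₀, mem_univ t₀, ?_⟩
        · split
          · rename_i hit
            have hh := hpos ⟨i, hi⟩ t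
            rw [← hit] at hh
            exact hh.le
          · simp
        · rw [if_pos ht₀'.symm]
          have hh := hpos ⟨i, hi⟩ t₀
          rw [ht₀'] at hh
          exact hh
      have hph : 0 < s i * hfun i := by
        rw [hhdef]
        simp only
        rw [Finset.mul_sum]
        exact Finset.sum_pos' (fun j _ => hterm j) ⟨⟨i, hi⟩, mem_univ _, hself⟩
      rcases hs i with h | h | h
      · rw [h] at hph ⊢
        have : hfun i < 0 := by linarith
        rw [Real.sign_of_neg this]
      · exact absurd h hi
      · rw [h] at hph ⊢
        have : 0 < hfun i := by linarith
        rw [Real.sign_of_pos this]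
  -- nonzero
  have hne : hfun ≠ 0 := by
    have hFFne : (FF s).Nonempty := Finset.card_pos.mp (by omega)
    obtain ⟨f, hf⟩ := hFFne
    have hsf : s f ≠ 0 := (mem_FF_elim s hf).1
    intro hz
    have : hfun f = 0 := by rw [hz]; rfl
    rw [← hsgn f, this, Real.sign_zero] at hsf
    exact hsf rfl
  exact ⟨hfun, hne, hmom, hsgn⟩

theorem signs_of_nonzero_solution_iff (g n : ℕ) (hg : 1 ≤ g) (hn : 0 < n)
    (x : Fin n → ℝ) (hx : StrictMono x)
    (s : Fin n → ℝ) (hs : ∀ i, s i = -1 ∨ s i = 0 ∨ s i = 1) :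
    (∃ h : Fin n → ℝ, h ≠ 0 ∧ (∀ k, k < g → ∑ i, x i ^ k * h i = 0) ∧
      ∀ i, Real.sign (h i) = s i) ↔ g ≤ signChanges s := by
  rw [signChanges_eq_card_FF]
  constructor
  · rintro ⟨h, hne, hmom, hsign⟩
    exact forward_dir s g x hx hs h hne hmom hsign
  · intro hcard
    exact backward_dir s g hg x hx hs hcard
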